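/- Let T be a bimonad on a monoidal category with left duals. Any natural transformation S : T ∘ ᵛ ∘ Tᵒᵖ ⟶ ᵛ satisfying the antipode axioms (HM1) (compatibility with evaluation) and (HM2) (compatibility with coevaluation) automatically satisfies the module conditions (HM0): S is compatible with the monad multiplication (S_x ∘ μ_{ᵛTx} = S_x ∘ T(S_{Tx} ∘ T(ᵛμ_x)) in the appropriate sense) and with the unit (S_x ∘ ι_{ᵛTx} ∘ ᵛι_x = id_{ᵛx}). -/

import Mathlib

open CategoryTheory MonoidalCategory Opposite

/-- A left duality on a monoidal category: a contravariant functor `ᵛ` together with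
dinatural evaluation and coevaluation families satisfying the snake identities. -/
structure LeftDuality (C : Type*) [Category C] [MonoidalCategory C] where
  V : Cᵒᵖ ⥤ C
  ev : ∀ a : C, V.obj (op a) ⊗ a ⟶ 𝟙_ C
  coev : ∀ a : C, 𝟙_ C ⟶ a ⊗ V.obj (op a)
  ev_dinatural : ∀ {a b : C} (f : a ⟶ b),
    (V.map f.op ⊗ₘ 𝟙 a) ≫ ev a = (𝟙 (V.obj (op b)) ⊗ₘ f) ≫ ev b
  coev_dinatural : ∀ {a b : C} (f : a ⟶ b),
    coev a ≫ (f ⊗ₘ 𝟙 (V.obj (op a))) = coev b ≫ (𝟙 b ⊗ₘ V.map f.op)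
  snake₁ : ∀ a : C,
    (λ_ a).inv ≫ (coev a ⊗ₘ 𝟙 a) ≫ (α_ a (V.obj (op a)) a).hom ≫
      (𝟙 a ⊗ₘ ev a) ≫ (ρ_ a).hom = 𝟙 a
  snake₂ : ∀ a : C,
    (ρ_ (V.obj (op a))).inv ≫ (𝟙 (V.obj (op a)) ⊗ₘ coev a) ≫
      (α_ (V.obj (op a)) a (V.obj (op a))).inv ≫ (ev a ⊗ₘ 𝟙 (V.obj (op a))) ≫
        (λ_ (V.obj (op a))).hom = 𝟙 (V.obj (op a))

variable {C : Type*} [Category C] [MonoidalCategory C]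

/-- For a bimonad `T` on a monoidal category with left duals, any natural
transformation `S : T ∘ ᵛ ∘ Tᵒᵖ ⟶ ᵛ` satisfying the antipode axioms (HM1)
(compatibility with evaluation) and (HM2) (compatibility with coevaluation)
automatically satisfies the module conditions (HM0): compatibility with the
multiplication and with the unit of the monad. -/
lemma dual_action_unique (W : C ⥤ C)
    (w2 : ∀ x y : C, W.obj (x ⊗ y) ⟶ W.obj x ⊗ W.obj y)
    (w0 : W.obj (𝟙_ C) ⟶ 𝟙_ C)
    (w2_nat : ∀ {x y x' y' : C} (f : x ⟶ x') (g : y ⟶ y'),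
      W.map (f ⊗ₘ g) ≫ w2 x' y' = w2 x y ≫ (W.map f ⊗ₘ W.map g))
    (w2_assoc : ∀ x y z : C,
      w2 (x ⊗ y) z ≫ (w2 x y ⊗ₘ 𝟙 (W.obj z)) ≫ (α_ (W.obj x) (W.obj y) (W.obj z)).hom =
        W.map (α_ x y z).hom ≫ w2 x (y ⊗ z) ≫ (𝟙 (W.obj x) ⊗ₘ w2 y z))
    (w2_left : ∀ x : C,
      w2 (𝟙_ C) x ≫ (w0 ⊗ₘ 𝟙 (W.obj x)) ≫ (λ_ (W.obj x)).hom = W.map (λ_ x).hom)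
    (w2_right : ∀ x : C,
      w2 x (𝟙_ C) ≫ (𝟙 (W.obj x) ⊗ₘ w0) ≫ (ρ_ (W.obj x)).hom = W.map (ρ_ x).hom)
    {A M : C} (e : A ⊗ M ⟶ 𝟙_ C) (c : 𝟙_ C ⟶ M ⊗ A)
    (snake : (ρ_ A).inv ≫ (𝟙 A ⊗ₘ c) ≫ (α_ A M A).inv ≫ (e ⊗ₘ 𝟙 A) ≫ (λ_ A).hom = 𝟙 A)
    (r : W.obj M ⟶ M) (f h : W.obj A ⟶ A)
    (Ef : W.map e ≫ w0 = w2 A M ≫ (f ⊗ₘ r) ≫ e)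
    (Ch : W.map c ≫ w2 M A ≫ (r ⊗ₘ h) = w0 ≫ c) : f = h := by
  have hK1 : W.map (ρ_ A).inv ≫ W.map (𝟙 A ⊗ₘ c) ≫ W.map (α_ A M A).inv ≫ w2 (A ⊗ M) A ≫
      (w2 A M ⊗ₘ 𝟙 (W.obj A)) ≫ ((f ⊗ₘ r) ⊗ₘ h) ≫ (e ⊗ₘ 𝟙 A) ≫ (λ_ A).hom = h := by
    slice_lhs 5 7 => rw [tensorHom_comp_tensorHom, tensorHom_comp_tensorHom]
    simp only [Category.id_comp, Category.comp_id, Category.assoc]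
    rw [← Ef]
    have h1 : ((W.map e ≫ w0) ⊗ₘ h) = (W.map e ⊗ₘ W.map (𝟙 A)) ≫ (w0 ⊗ₘ h) := by
      rw [tensorHom_comp_tensorHom, W.map_id, Category.id_comp]
    rw [h1]
    slice_lhs 4 5 => rw [← w2_nat]
    have h2 : (w0 ⊗ₘ h) ≫ (λ_ A).hom =
        (w0 ⊗ₘ 𝟙 (W.obj A)) ≫ (λ_ (W.obj A)).hom ≫ h := by
      rw [show (w0 ⊗ₘ h) = (w0 ⊗ₘ 𝟙 (W.obj A)) ≫ (𝟙 (𝟙_ C) ⊗ₘ h) by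
        rw [tensorHom_comp_tensorHom, Category.comp_id, Category.id_comp]]
      rw [Category.assoc, id_tensorHom, leftUnitor_naturality]
    rw [Category.assoc, h2]
    slice_lhs 5 7 => rw [w2_left]
    slice_lhs 1 5 => rw [← W.map_comp, ← W.map_comp, ← W.map_comp, ← W.map_comp]
    simp only [Category.assoc, snake, W.map_id, Category.id_comp]
  have hK2 : W.map (ρ_ A).inv ≫ W.map (𝟙 A ⊗ₘ c) ≫ W.map (α_ A M A).inv ≫ w2 (A ⊗ M) A ≫
      (w2 A M ⊗ₘ 𝟙 (W.obj A)) ≫ ((f ⊗ₘ r) ⊗ₘ h) ≫ (e ⊗ₘ 𝟙 A) ≫ (λ_ A).hom = f := by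
    have assoc' : w2 (A ⊗ M) A ≫ (w2 A M ⊗ₘ 𝟙 (W.obj A)) =
        W.map (α_ A M A).hom ≫ w2 A (M ⊗ A) ≫ (𝟙 (W.obj A) ⊗ₘ w2 M A) ≫
          (α_ (W.obj A) (W.obj M) (W.obj A)).inv := by
      rw [← cancel_mono (α_ (W.obj A) (W.obj M) (W.obj A)).hom]
      simpa only [Category.assoc, Iso.inv_hom_id, Category.comp_id] using w2_assoc A M A
    slice_lhs 4 5 => rw [assoc']
    slice_lhs 3 4 => rw [← W.map_comp, Iso.inv_hom_id, W.map_id]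
    simp only [Category.id_comp, Category.assoc]
    slice_lhs 5 6 => rw [← associator_inv_naturality]
    slice_lhs 2 3 => rw [w2_nat (𝟙 A) c, W.map_id]
    slice_lhs 3 5 => rw [tensorHom_comp_tensorHom, tensorHom_comp_tensorHom, Category.id_comp, Category.id_comp]
    rw [Ch]
    have h4 : (f ⊗ₘ (w0 ≫ c)) = (𝟙 (W.obj A) ⊗ₘ w0) ≫ (f ⊗ₘ c) := by
      rw [tensorHom_comp_tensorHom, Category.id_comp]
    rw [h4]
    have h5 : w2 A (𝟙_ C) ≫ (𝟙 (W.obj A) ⊗ₘ w0) = W.map (ρ_ A).hom ≫ (ρ_ (W.obj A)).inv := by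
      rw [← cancel_mono (ρ_ (W.obj A)).hom]
      simpa only [Category.assoc, Iso.inv_hom_id, Category.comp_id] using w2_right A
    slice_lhs 2 3 => rw [h5]
    slice_lhs 1 2 => rw [← W.map_comp, Iso.inv_hom_id, W.map_id]
    simp only [Category.id_comp, Category.assoc]
    have h6 : (f ⊗ₘ c) = (f ⊗ₘ 𝟙 (𝟙_ C)) ≫ (𝟙 A ⊗ₘ c) := by
      rw [tensorHom_comp_tensorHom, Category.comp_id, Category.id_comp]
    rw [h6]
    have h7 : (ρ_ (W.obj A)).inv ≫ (f ⊗ₘ 𝟙 (𝟙_ C)) = f ≫ (ρ_ A).inv := by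
      rw [tensorHom_id, ← rightUnitor_inv_naturality]
    slice_lhs 1 2 => rw [h7]
    simp only [Category.assoc]
    rw [snake, Category.comp_id]
  exact hK2.symm.trans hK1

set_option maxHeartbeats 1000000 in
theorem HM1_HM2_implies_HM0 (T : Monad C) (D : LeftDuality C)
    (σ2 : ∀ x y : C, T.obj (x ⊗ y) ⟶ T.obj x ⊗ T.obj y)
    (σ0 : T.obj (𝟙_ C) ⟶ 𝟙_ C)
    (σ2_natural : ∀ {x y x' y' : C} (f : x ⟶ x') (g : y ⟶ y'),
      T.map (f ⊗ₘ g) ≫ σ2 x' y' = σ2 x y ≫ (T.map f ⊗ₘ T.map g))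
    (σ2_assoc : ∀ x y z : C,
      σ2 (x ⊗ y) z ≫ (σ2 x y ⊗ₘ 𝟙 (T.obj z)) ≫ (α_ (T.obj x) (T.obj y) (T.obj z)).hom =
        T.map (α_ x y z).hom ≫ σ2 x (y ⊗ z) ≫ (𝟙 (T.obj x) ⊗ₘ σ2 y z))
    (σ2_left_unit : ∀ x : C,
      σ2 (𝟙_ C) x ≫ (σ0 ⊗ₘ 𝟙 (T.obj x)) ≫ (λ_ (T.obj x)).hom = T.map (λ_ x).hom)
    (σ2_right_unit : ∀ x : C,
      σ2 x (𝟙_ C) ≫ (𝟙 (T.obj x) ⊗ₘ σ0) ≫ (ρ_ (T.obj x)).hom = T.map (ρ_ x).hom)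
    (BM1 : ∀ x y : C, T.μ.app (x ⊗ y) ≫ σ2 x y =
      T.map (σ2 x y) ≫ σ2 (T.obj x) (T.obj y) ≫ (T.μ.app x ⊗ₘ T.μ.app y))
    (BM2 : T.μ.app (𝟙_ C) ≫ σ0 = T.map σ0 ≫ σ0)
    (BM3 : ∀ x y : C, T.η.app (x ⊗ y) ≫ σ2 x y = (T.η.app x ⊗ₘ T.η.app y))
    (BM4 : T.η.app (𝟙_ C) ≫ σ0 = 𝟙 (𝟙_ C))
    (S : ∀ x : C, T.obj (D.V.obj (op (T.obj x))) ⟶ D.V.obj (op x))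
    (S_natural : ∀ {x y : C} (f : x ⟶ y),
      T.map (D.V.map (T.map f).op) ≫ S x = S y ≫ D.V.map f.op)
    (HM1 : ∀ x : C,
      T.map (D.ev (T.obj x)) ≫ σ0 =
        σ2 (D.V.obj (op (T.obj x))) (T.obj x) ≫
          ((T.map (D.V.map (T.μ.app x).op) ≫ S (T.obj x)) ⊗ₘ T.μ.app x) ≫
            D.ev (T.obj x))
    (HM2 : ∀ x : C,
      T.map (D.coev (T.obj x)) ≫ σ2 (T.obj x) (D.V.obj (op (T.obj x))) ≫
          (T.μ.app x ⊗ₘ (T.map (D.V.map (T.μ.app x).op) ≫ S (T.obj x))) =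
        σ0 ≫ D.coev (T.obj x)) :
    (∀ x : C, T.μ.app (D.V.obj (op (T.obj x))) ≫ S x =
      T.map (T.map (D.V.map (T.μ.app x).op)) ≫ T.map (S (T.obj x)) ≫ S x) ∧
    (∀ x : C, T.η.app (D.V.obj (op (T.obj x))) ≫ S x = D.V.map (T.η.app x).op) := by
  -- (★)  S x = (T(ᵛμ) ≫ S_{Tx}) ≫ ᵛη
  have star : ∀ x : C, S x =
      (T.map (D.V.map (T.μ.app x).op) ≫ S (T.obj x)) ≫ D.V.map (T.η.app x).op := by
    intro x
    have key : T.map (D.V.map (T.μ.app x).op) ≫ T.map (D.V.map (T.map (T.η.app x)).op) ≫ S x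
        = S x := by
      rw [← Category.assoc, ← T.map_comp, ← D.V.map_comp, ← op_comp, Monad.right_unit]
      simp
    calc S x = T.map (D.V.map (T.μ.app x).op) ≫ T.map (D.V.map (T.map (T.η.app x)).op) ≫ S x :=
        key.symm
      _ = T.map (D.V.map (T.μ.app x).op) ≫ S (T.obj x) ≫ D.V.map (T.η.app x).op := by
        rw [S_natural (x := x) (T.η.app x)]
      _ = _ := by rw [← Category.assoc]
  -- unit law
  have unit_a : ∀ x : C, T.η.app (D.V.obj (op (T.obj x))) ≫
      (T.map (D.V.map (T.μ.app x).op) ≫ S (T.obj x)) = 𝟙 (D.V.obj (op (T.obj x))) := by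
    intro x
    have h1 : T.η.app (D.V.obj (op (T.obj x)) ⊗ T.obj x) ≫ T.map (D.ev (T.obj x)) ≫ σ0 =
        D.ev (T.obj x) := by
      rw [← Category.assoc, ← T.η.naturality (D.ev (T.obj x))]
      simp only [Functor.id_map, Functor.id_obj, Category.assoc, BM4, Category.comp_id]
    have st : ((T.η.app (D.V.obj (op (T.obj x))) ≫
        (T.map (D.V.map (T.μ.app x).op) ≫ S (T.obj x))) ⊗ₘ 𝟙 (T.obj x)) ≫ D.ev (T.obj x) =
        D.ev (T.obj x) := by
      calc ((T.η.app (D.V.obj (op (T.obj x))) ≫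
            (T.map (D.V.map (T.μ.app x).op) ≫ S (T.obj x))) ⊗ₘ 𝟙 (T.obj x)) ≫ D.ev (T.obj x)
          = ((T.η.app (D.V.obj (op (T.obj x))) ≫
              (T.map (D.V.map (T.μ.app x).op) ≫ S (T.obj x))) ⊗ₘ
              (T.η.app (T.obj x) ≫ T.μ.app x)) ≫ D.ev (T.obj x) := by
            simp only [Monad.left_unit, Functor.id_obj]
        _ = ((T.η.app (D.V.obj (op (T.obj x))) ⊗ₘ T.η.app (T.obj x)) ≫
              ((T.map (D.V.map (T.μ.app x).op) ≫ S (T.obj x)) ⊗ₘ T.μ.app x)) ≫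
              D.ev (T.obj x) := by rw [tensorHom_comp_tensorHom]
        _ = T.η.app (D.V.obj (op (T.obj x)) ⊗ T.obj x) ≫ σ2 (D.V.obj (op (T.obj x))) (T.obj x) ≫
              ((T.map (D.V.map (T.μ.app x).op) ≫ S (T.obj x)) ⊗ₘ T.μ.app x) ≫
              D.ev (T.obj x) := by
            rw [← BM3]; simp only [Category.assoc]
        _ = T.η.app (D.V.obj (op (T.obj x)) ⊗ T.obj x) ≫ T.map (D.ev (T.obj x)) ≫ σ0 := by
            rw [← HM1 x]
        _ = D.ev (T.obj x) := h1
    refine dual_action_unique (𝟭 C) (fun u v => 𝟙 (u ⊗ v)) (𝟙 (𝟙_ C))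
      (fun f g => by simp) (fun u v w => by simp) (fun u => by simp) (fun u => by simp)
      (D.ev (T.obj x)) (D.coev (T.obj x)) (D.snake₂ (T.obj x)) (𝟙 (T.obj x)) _ _ ?_ ?_
    · simp only [Functor.id_obj, Functor.id_map, Category.comp_id, Category.id_comp]
      exact st.symm
    · simp
  -- multiplicativity
  have mult_a : ∀ x : C, T.μ.app (D.V.obj (op (T.obj x))) ≫
      (T.map (D.V.map (T.μ.app x).op) ≫ S (T.obj x)) =
      T.map (T.map (D.V.map (T.μ.app x).op) ≫ S (T.obj x)) ≫
      (T.map (D.V.map (T.μ.app x).op) ≫ S (T.obj x)) := by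
    intro x
    refine dual_action_unique (T.toFunctor ⋙ T.toFunctor)
      (fun u v => T.map (σ2 u v) ≫ σ2 (T.obj u) (T.obj v)) (T.map σ0 ≫ σ0)
      ?_ ?_ ?_ ?_
      (D.ev (T.obj x)) (D.coev (T.obj x)) (D.snake₂ (T.obj x))
      (T.map (T.μ.app x) ≫ T.μ.app x) _ _ ?_ ?_
    · -- naturality
      intro u v u' v' f g
      simp only [Functor.comp_obj, Functor.comp_map]
      slice_lhs 1 2 => rw [← T.map_comp, σ2_natural, T.map_comp]
      slice_lhs 2 3 => rw [σ2_natural]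
      simp only [Category.assoc]
    · -- assoc
      intro u v w
      simp only [Functor.comp_obj, Functor.comp_map]
      rw [comp_tensor_id]
      slice_lhs 2 3 =>
        rw [show 𝟙 (T.obj (T.obj w)) = T.map (𝟙 (T.obj w)) from (T.map_id _).symm, ← σ2_natural]
      slice_lhs 3 5 => rw [σ2_assoc]
      slice_lhs 1 3 => rw [← T.map_comp, ← T.map_comp, σ2_assoc]
      simp only [Functor.map_comp, Category.assoc]
      slice_lhs 3 4 => rw [σ2_natural]
      rw [T.map_id]
      slice_lhs 4 5 => rw [tensorHom_comp_tensorHom, Category.id_comp]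
      try simp only [Category.assoc]
    · -- left unit
      intro u
      simp only [Functor.comp_obj, Functor.comp_map]
      rw [comp_tensor_id]
      slice_lhs 2 3 =>
        rw [show 𝟙 (T.obj (T.obj u)) = T.map (𝟙 (T.obj u)) from (T.map_id _).symm, ← σ2_natural]
      slice_lhs 3 5 => rw [σ2_left_unit]
      slice_lhs 1 3 => rw [← T.map_comp, ← T.map_comp, σ2_left_unit]
    · -- right unit
      intro u
      simp only [Functor.comp_obj, Functor.comp_map]
      rw [id_tensor_comp]
      slice_lhs 2 3 =>
        rw [show 𝟙 (T.obj (T.obj u)) = T.map (𝟙 (T.obj u)) from (T.map_id _).symm, ← σ2_natural]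
      slice_lhs 3 5 => rw [σ2_right_unit]
      slice_lhs 1 3 => rw [← T.map_comp, ← T.map_comp, σ2_right_unit]
    · -- Ef
      simp only [Functor.comp_obj, Functor.comp_map]
      rw [Monad.assoc, ← tensorHom_comp_tensorHom]
      slice_rhs 1 3 => rw [← BM1]
      slice_rhs 2 4 => rw [← HM1 x]
      slice_rhs 1 2 => rw [← T.μ.naturality (D.ev (T.obj x))]
      simp only [Functor.comp_map, Category.assoc]
      rw [BM2]
    · -- Ch
      simp only [Functor.comp_obj, Functor.comp_map]
      rw [← tensorHom_comp_tensorHom]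
      slice_lhs 3 4 => rw [← σ2_natural]
      slice_lhs 1 3 => rw [← T.map_comp, ← T.map_comp, HM2 x]
      rw [T.map_comp]
      simp only [Category.assoc]
      rw [HM2 x]
  constructor
  · intro x
    calc T.μ.app (D.V.obj (op (T.obj x))) ≫ S x
        = T.μ.app (D.V.obj (op (T.obj x))) ≫
            (T.map (D.V.map (T.μ.app x).op) ≫ S (T.obj x)) ≫ D.V.map (T.η.app x).op := by
          rw [← star x]
      _ = (T.μ.app (D.V.obj (op (T.obj x))) ≫
            (T.map (D.V.map (T.μ.app x).op) ≫ S (T.obj x))) ≫ D.V.map (T.η.app x).op := by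
          simp only [Category.assoc]
      _ = (T.map (T.map (D.V.map (T.μ.app x).op) ≫ S (T.obj x)) ≫
            (T.map (D.V.map (T.μ.app x).op) ≫ S (T.obj x))) ≫ D.V.map (T.η.app x).op := by
          rw [mult_a x]
      _ = T.map (T.map (D.V.map (T.μ.app x).op) ≫ S (T.obj x)) ≫
            ((T.map (D.V.map (T.μ.app x).op) ≫ S (T.obj x)) ≫ D.V.map (T.η.app x).op) := by
          simp only [Category.assoc]
      _ = T.map (T.map (D.V.map (T.μ.app x).op) ≫ S (T.obj x)) ≫ S x := by rw [← star x]
      _ = T.map (T.map (D.V.map (T.μ.app x).op)) ≫ T.map (S (T.obj x)) ≫ S x := by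
          rw [T.map_comp]; simp only [Category.assoc]
  · intro x
    rw [star x, ← Category.assoc, unit_a x]
    simp
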